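/- Let T be a finite tree with a nonnegative vertex weight function c of total weight N, and let v be a vertex of T whose c-branch weight is at most N/2 (i.e., a c-median vertex). Then for any two distinct components T_i, T_j of T − v whose combined weight C_i + C_j is at most N/2, moving the subtree T_i to be attached below T_j (deleting the edge from v to T_i and adding an edge from the v-neighbour in T_i to the v-neighbour in T_j) yields a tree H in which v is still a c-median vertex and σ_c(v,H) = σ_c(v,T) + C_i. -/

import Mathlib

open Finset
open scoped Classical

/-- The total weight of the component of `T - v` containing `u`
(`0` if `u = v`). -/
noncomputable def compWeight {V : Type*} [Fintype V]
    (T : SimpleGraph V) (c : V → ℝ) (v u : V) : ℝ :=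
  ∑ w, if ∃ (hu : u ∈ ({v}ᶜ : Set V)) (hw : w ∈ ({v}ᶜ : Set V)),
      (SimpleGraph.induce ({v}ᶜ : Set V) T).Reachable ⟨u, hu⟩ ⟨w, hw⟩
    then c w else 0


namespace MoveBranchAux

open SimpleGraph Walk

variable {V : Type*}

/-- Reachability within the complement of `v`. -/
def Rel (G : SimpleGraph V) (v a b : V) : Prop :=
  ∃ (ha : a ∈ ({v}ᶜ : Set V)) (hb : b ∈ ({v}ᶜ : Set V)),
    (SimpleGraph.induce ({v}ᶜ : Set V) G).Reachable ⟨a, ha⟩ ⟨b, hb⟩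

lemma memc {a v : V} (h : a ≠ v) : a ∈ ({v}ᶜ : Set V) := by simpa using h

lemma Rel.ne_left {G : SimpleGraph V} {v a b : V} (h : Rel G v a b) : a ≠ v := by
  obtain ⟨ha, -, -⟩ := h; simpa using ha

lemma Rel.ne_right {G : SimpleGraph V} {v a b : V} (h : Rel G v a b) : b ≠ v := by
  obtain ⟨-, hb, -⟩ := h; simpa using hb

lemma Rel.symm {G : SimpleGraph V} {v a b : V} (h : Rel G v a b) : Rel G v b a := by
  obtain ⟨ha, hb, hr⟩ := h; exact ⟨hb, ha, hr.symm⟩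

lemma Rel.trans {G : SimpleGraph V} {v a b c : V} (h1 : Rel G v a b) (h2 : Rel G v b c) :
    Rel G v a c := by
  obtain ⟨ha, hb, hr1⟩ := h1
  obtain ⟨hb', hc, hr2⟩ := h2
  exact ⟨ha, hc, hr1.trans hr2⟩

lemma rel_refl {G : SimpleGraph V} {v a : V} (h : a ≠ v) : Rel G v a a :=
  ⟨memc h, memc h, Reachable.refl _⟩

lemma rel_of_walk {G : SimpleGraph V} {v a b : V} (p : G.Walk a b)
    (hp : v ∉ p.support) (ha : a ≠ v) (hb : b ≠ v) : Rel G v a b := by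
  induction p with
  | nil => exact rel_refl ha
  | @cons x y z h q ih =>
    have hsup : v ≠ x ∧ v ∉ q.support := by
      rw [Walk.support_cons] at hp; simpa using hp
    have hy : y ≠ v := by
      intro h'; exact hsup.2 (h' ▸ q.start_mem_support)
    refine Rel.trans ⟨memc ha, memc hy, Adj.reachable ?_⟩ (ih hsup.2 hy hb)
    exact h

lemma walk_of_rel {G : SimpleGraph V} {v a b : V} (h : Rel G v a b) :
    ∃ p : G.Walk a b, v ∉ p.support := by
  obtain ⟨ha, hb, ⟨q⟩⟩ := h
  refine ⟨(q.map (Embedding.induce ({v}ᶜ : Set V)).toHom).copy rfl rfl, ?_⟩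
  change v ∉ (q.map (Embedding.induce ({v}ᶜ : Set V)).toHom).support
  rw [Walk.support_map]
  intro hv
  obtain ⟨x, _, hxv⟩ := List.mem_map.mp hv
  exact x.2 (by simpa using hxv)

lemma rel_of_adj {G : SimpleGraph V} {v a b : V} (h : G.Adj a b)
    (ha : a ≠ v) (hb : b ≠ v) : Rel G v a b :=
  rel_of_walk (Walk.cons h Walk.nil) (by simp [Ne.symm ha, Ne.symm hb]) ha hb

lemma rel_mono {G G' : SimpleGraph V} (hle : G ≤ G') {v a b : V}
    (h : Rel G v a b) : Rel G' v a b := by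
  obtain ⟨p, hp⟩ := walk_of_rel h
  refine rel_of_walk (p.transfer G' fun e he => edgeSet_mono hle (p.edges_subset_edgeSet he))
    ?_ h.ne_left h.ne_right
  rwa [Walk.support_transfer]

lemma reachable_of_walk {G G₂ : SimpleGraph V}
    (h : ∀ {x y : V}, G.Adj x y → G₂.Reachable x y) {a b : V} (p : G.Walk a b) :
    G₂.Reachable a b := by
  induction p with
  | nil => exact Reachable.refl _
  | cons h' q ih => exact (h h').trans ih

lemma sdiff_single_adj {G : SimpleGraph V} {e : Sym2 V} {x y : V} :
    (G \ fromEdgeSet {e}).Adj x y ↔ G.Adj x y ∧ s(x, y) ≠ e := by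
  rw [sdiff_adj, fromEdgeSet_adj]
  constructor
  · rintro ⟨h1, h2⟩
    exact ⟨h1, fun he => h2 ⟨by simpa using he, h1.ne⟩⟩
  · rintro ⟨h1, h2⟩
    exact ⟨h1, fun he => h2 (by simpa using he.1)⟩

lemma dist_adj_le {G : SimpleGraph V} (hG : G.Connected) {a b w : V} (h : G.Adj a b) :
    G.dist w b ≤ G.dist w a + 1 := by
  calc G.dist w b ≤ G.dist w a + G.dist a b := hG.dist_triangle
    _ ≤ G.dist w a + 1 := by
        have := dist_le (Walk.cons h Walk.nil)
        simpa using this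

lemma dist_split {G : SimpleGraph V} (hG : G.Connected) {v a b : V}
    (h : ¬ Rel G v a b) : G.dist a b = G.dist a v + G.dist v b := by
  obtain ⟨p, hlen⟩ := hG.exists_walk_length_eq_dist a b
  have hv : v ∈ p.support := by
    by_contra hvp
    have ha : a ≠ v := fun he => hvp (he ▸ p.start_mem_support)
    have hb : b ≠ v := fun he => hvp (he ▸ p.end_mem_support)
    exact h (rel_of_walk p hvp ha hb)
  refine le_antisymm hG.dist_triangle ?_
  calc G.dist a v + G.dist v b ≤ (p.takeUntil v hv).length + (p.dropUntil v hv).length :=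
        add_le_add (dist_le _) (dist_le _)
    _ = p.length := by rw [← Walk.length_append, Walk.take_spec]
    _ = G.dist a b := hlen

lemma path_from_v {G : SimpleGraph V} {v w : V} (p : G.Walk v w) (hp : p.IsPath)
    (hw : w ≠ v) :
    ∃ (x : V) (hvx : G.Adj v x) (rest : G.Walk x w),
      p = Walk.cons hvx rest ∧ v ∉ rest.support ∧ Rel G v x w := by
  cases p with
  | nil => exact absurd rfl hw
  | @cons _ x _ h q =>
    obtain ⟨hq, hv⟩ := (Walk.cons_isPath_iff _ _).mp hp
    exact ⟨x, h, q, rfl, hv, rel_of_walk q hv h.ne' hw⟩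

lemma nbr_unique {T : SimpleGraph V} (hT : T.IsAcyclic) {v x y : V}
    (hx : T.Adj v x) (hy : T.Adj v y) (h : Rel T v x y) : x = y := by
  obtain ⟨p, hp⟩ := walk_of_rel h
  have hb : v ∉ p.bypass.support := fun hv => hp (p.support_bypass_subset hv)
  have h1 : (Walk.cons hy Walk.nil : T.Walk v y).IsPath := by simp [hy.ne]
  have h2 : (Walk.cons hx p.bypass).IsPath := (Walk.cons_isPath_iff _ _).mpr ⟨p.bypass_isPath, hb⟩
  have heq := hT.path_unique ⟨_, h2⟩ ⟨_, h1⟩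
  have hw : Walk.cons hx p.bypass = Walk.cons hy Walk.nil := congrArg Subtype.val heq
  have hsup := congrArg Walk.support hw
  rw [Walk.support_cons, Walk.support_cons, Walk.support_eq_cons p.bypass] at hsup
  simp at hsup
  simpa [hsup] using p.bypass.start_mem_support

end MoveBranchAux

open MoveBranchAux SimpleGraph Walk in
lemma compWeight_eq {V : Type*} [Fintype V] (G : SimpleGraph V) (c : V → ℝ) (v u : V) :
    compWeight G c v u = ∑ w, if Rel G v u w then c w else 0 := by
  unfold compWeight MoveBranchAux.Rel
  exact Finset.sum_congr rfl fun w _ => by congr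

open MoveBranchAux SimpleGraph Walk in
theorem move_branch_keeps_median {V : Type*} [Fintype V] [DecidableEq V]
    (T : SimpleGraph V) (hT : T.IsTree)
    (c : V → ℝ) (hc : ∀ v, 0 ≤ c v)
    (N : ℝ) (hN : N = ∑ u, c u)
    (v ui uj : V) (hvi : T.Adj v ui) (hvj : T.Adj v uj)
    -- the components of `T - v` containing `ui` and `uj` are distinct:
    (hdist : ¬ ∃ (hi : ui ∈ ({v}ᶜ : Set V)) (hj : uj ∈ ({v}ᶜ : Set V)),
        (SimpleGraph.induce ({v}ᶜ : Set V) T).Reachable ⟨ui, hi⟩ ⟨uj, hj⟩)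
    -- `v` is a `c`-median vertex: its branch weight is at most `N / 2`:
    (hmedian : ∀ u : V, compWeight T c v u ≤ N / 2)
    -- the combined weight of the two components is at most `N / 2`:
    (hsmall : compWeight T c v ui + compWeight T c v uj ≤ N / 2) :
    ∀ H : SimpleGraph V,
      H = SimpleGraph.fromEdgeSet ((T.edgeSet \ {s(v, ui)}) ∪ {s(ui, uj)}) →
      H.IsTree ∧
      (∀ u : V, compWeight H c v u ≤ N / 2) ∧
      (∀ u : V, (∑ w, c w * H.dist v w) ≤ ∑ w, c w * H.dist u w) ∧
      (∑ w, c w * H.dist v w) = (∑ w, c w * T.dist v w) + compWeight T c v ui := by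
  intro H hH
  have hui : ui ≠ v := hvi.ne'
  have huj : uj ≠ v := hvj.ne'
  have hndist : ¬ Rel T v ui uj := hdist
  have hij : ui ≠ uj := by rintro rfl; exact hndist (rel_refl hui)
  have hTc : T.Connected := hT.isConnected
  have hTa : T.IsAcyclic := hT.IsAcyclic
  have relvFalse : ∀ a : V, ¬ Rel T v a v := fun a ⟨_, hb, _⟩ => (by simpa using hb : v ≠ v) rfl
  have relvFalseH : ∀ a : V, ¬ Rel H v a v := fun a ⟨_, hb, _⟩ => (by simpa using hb : v ≠ v) rfl
  -- adjacency characterisation of H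
  have hAdj : ∀ x y : V, H.Adj x y ↔ (T.Adj x y ∧ s(x, y) ≠ s(v, ui)) ∨ s(x, y) = s(ui, uj) := by
    subst hH
    intro x y
    rw [fromEdgeSet_adj]
    simp only [Set.mem_union, Set.mem_diff, Set.mem_singleton_iff, SimpleGraph.mem_edgeSet]
    constructor
    · rintro ⟨⟨h1, h2⟩ | h, _⟩
      · exact Or.inl ⟨h1, h2⟩
      · exact Or.inr h
    · rintro (⟨h1, h2⟩ | h)
      · exact ⟨Or.inl ⟨h1, h2⟩, h1.ne⟩
      · refine ⟨Or.inr h, ?_⟩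
        rcases Sym2.eq_iff.mp h with ⟨rfl, rfl⟩ | ⟨rfl, rfl⟩
        exacts [hij, hij.symm]
  have hHvx : ∀ x : V, H.Adj v x ↔ (T.Adj v x ∧ x ≠ ui) := by
    intro x
    rw [hAdj]
    constructor
    · rintro (⟨h1, h2⟩ | h)
      · exact ⟨h1, fun he => h2 (by rw [he])⟩
      · rcases Sym2.eq_iff.mp h with ⟨rfl, rfl⟩ | ⟨rfl, rfl⟩
        exacts [absurd rfl hui.symm, absurd rfl huj.symm]
    · rintro ⟨h1, h2⟩
      exact Or.inl ⟨h1, fun he => h2 (Sym2.congr_right.mp he)⟩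
  have hHuj : H.Adj v uj := (hHvx uj).mpr ⟨hvj, hij.symm⟩
  have hHij : H.Adj ui uj := (hAdj ui uj).mpr (Or.inr rfl)
  -- connectivity of H
  have hstep : ∀ {x y : V}, T.Adj x y → H.Reachable x y := by
    intro x y h
    by_cases hxy : s(x, y) = s(v, ui)
    · rcases Sym2.eq_iff.mp hxy with ⟨rfl, rfl⟩ | ⟨rfl, rfl⟩
      · exact (Walk.cons hHuj (Walk.cons hHij.symm Walk.nil)).reachable
      · exact (Walk.cons hHuj (Walk.cons hHij.symm Walk.nil)).reachable.symm
    · exact ((hAdj x y).mpr (Or.inl ⟨h, hxy⟩)).reachable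
  have hHconn : H.Connected := by
    have hne : Nonempty V := hTc.nonempty
    refine Connected.mk fun a b => ?_
    obtain ⟨p⟩ := hTc.preconnected a b
    exact reachable_of_walk (fun h => hstep h) p
  -- transferring walks avoiding v from T to H
  have hTwalkH : ∀ {x y : V} (q : T.Walk x y), v ∉ q.support → ∀ e ∈ q.edges, e ∈ H.edgeSet := by
    intro x y q hq e he
    induction e using Sym2.ind with
    | _ s t =>
      rw [SimpleGraph.mem_edgeSet, hAdj]
      refine Or.inl ⟨q.adj_of_mem_edges he, fun hcontra => ?_⟩
      rcases Sym2.eq_iff.mp hcontra with ⟨hs, -⟩ | ⟨-, ht⟩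
      · exact hq (hs ▸ q.fst_mem_support_of_mem_edges he)
      · exact hq (ht ▸ q.snd_mem_support_of_mem_edges he)
  have RT_to_RH : ∀ {a b : V}, Rel T v a b → Rel H v a b := by
    intro a b h
    obtain ⟨p, hp⟩ := walk_of_rel h
    refine rel_of_walk (p.transfer H (hTwalkH p hp)) ?_ h.ne_left h.ne_right
    rwa [Walk.support_transfer]
  have RHuiuj : Rel H v ui uj := rel_of_adj hHij hui huj
  -- characterisation of components of H - v
  have RH_char : ∀ a b : V, Rel H v a b ↔
      (Rel T v a b ∨ (Rel T v a ui ∧ Rel T v uj b) ∨ (Rel T v a uj ∧ Rel T v ui b)) := by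
    have rhstrans : ∀ {a b d : V},
        (Rel T v a b ∨ (Rel T v a ui ∧ Rel T v uj b) ∨ (Rel T v a uj ∧ Rel T v ui b)) →
        (Rel T v b d ∨ (Rel T v b ui ∧ Rel T v uj d) ∨ (Rel T v b uj ∧ Rel T v ui d)) →
        (Rel T v a d ∨ (Rel T v a ui ∧ Rel T v uj d) ∨ (Rel T v a uj ∧ Rel T v ui d)) := by
      rintro a b d (h1 | ⟨h1, h1'⟩ | ⟨h1, h1'⟩) (h2 | ⟨h2, h2'⟩ | ⟨h2, h2'⟩)
      · exact Or.inl (h1.trans h2)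
      · exact Or.inr (Or.inl ⟨h1.trans h2, h2'⟩)
      · exact Or.inr (Or.inr ⟨h1.trans h2, h2'⟩)
      · exact Or.inr (Or.inl ⟨h1, h1'.trans h2⟩)
      · exact absurd (h1'.trans h2).symm hndist
      · exact Or.inl (h1.trans h2')
      · exact Or.inr (Or.inr ⟨h1, h1'.trans h2⟩)
      · exact Or.inl (h1.trans h2')
      · exact absurd (h1'.trans h2) hndist
    intro a b
    constructor
    · intro h
      obtain ⟨p, hp⟩ := walk_of_rel h
      have ha := h.ne_left
      have hb := h.ne_right
      clear h
      induction p with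
      | nil => exact Or.inl (rel_refl ha)
      | @cons x y z hadj q ih =>
        have hsup : v ≠ x ∧ v ∉ q.support := by
          rw [Walk.support_cons] at hp; simpa using hp
        have hy : y ≠ v := fun h' => hsup.2 (h' ▸ q.start_mem_support)
        have step : Rel T v x y ∨ (Rel T v x ui ∧ Rel T v uj y) ∨
            (Rel T v x uj ∧ Rel T v ui y) := by
          rcases (hAdj x y).mp hadj with ⟨hT', hne⟩ | he
          · exact Or.inl (rel_of_adj hT' ha hy)
          · rcases Sym2.eq_iff.mp he with ⟨rfl, rfl⟩ | ⟨rfl, rfl⟩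
            · exact Or.inr (Or.inl ⟨rel_refl hui, rel_refl huj⟩)
            · exact Or.inr (Or.inr ⟨rel_refl huj, rel_refl hui⟩)
        exact rhstrans step (ih hsup.2 hy hb)
    · rintro (h | ⟨h1, h2⟩ | ⟨h1, h2⟩)
      · exact RT_to_RH h
      · exact ((RT_to_RH h1).trans RHuiuj).trans (RT_to_RH h2)
      · exact ((RT_to_RH h1).trans RHuiuj.symm).trans (RT_to_RH h2)
  -- distances from v in H
  have hdistH : ∀ w : V, H.dist v w = T.dist v w + (if Rel T v ui w then 1 else 0) := by
    have lip : ∀ {a b : V}, H.Adj a b →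
        T.dist v b + (if Rel T v ui b then 1 else 0) ≤
        T.dist v a + (if Rel T v ui a then 1 else 0) + 1 := by
      intro a b hab
      rcases (hAdj a b).mp hab with ⟨hT', hne⟩ | he
      · have hiff : Rel T v ui a ↔ Rel T v ui b := by
          by_cases hav : a = v
          · have hbui : b ≠ ui := fun h => hne (by rw [h, hav])
            constructor
            · intro h; rw [hav] at h; exact absurd h (relvFalse ui)
            · intro h
              have hT'' : T.Adj v b := hav ▸ hT'
              exact absurd (nbr_unique hTa hT'' hvi h.symm) hbui
          · by_cases hbv : b = v
            · have haui : a ≠ ui := fun h => hne (by rw [h, hbv, Sym2.eq_swap])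
              constructor
              · intro h
                have hva : T.Adj v a := (hbv ▸ hT').symm
                exact absurd (nbr_unique hTa hvi hva h).symm haui
              · intro h; rw [hbv] at h; exact absurd h (relvFalse ui)
            · have hrel := rel_of_adj hT' hav hbv
              exact ⟨fun h => h.trans hrel, fun h => h.trans hrel.symm⟩
        rw [if_congr hiff rfl rfl]
        have := dist_adj_le hTc (w := v) hT'
        omega
      · have d1 : T.dist v ui = 1 := dist_eq_one_iff_adj.mpr hvi
        have d2 : T.dist v uj = 1 := dist_eq_one_iff_adj.mpr hvj
        have r1 : Rel T v ui ui := rel_refl hui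
        rcases Sym2.eq_iff.mp he with ⟨rfl, rfl⟩ | ⟨rfl, rfl⟩ <;>
          simp [d1, d2, hndist, r1]
    intro w
    have lower : T.dist v w + (if Rel T v ui w then 1 else 0) ≤ H.dist v w := by
      obtain ⟨p, hp⟩ := hHconn.exists_walk_length_eq_dist v w
      rw [← hp]
      have key : ∀ {a b : V} (q : H.Walk a b),
          T.dist v b + (if Rel T v ui b then 1 else 0) ≤
          T.dist v a + (if Rel T v ui a then 1 else 0) + q.length := by
        intro a b q
        induction q with
        | nil => simp
        | @cons x y z hadj q ih =>
          have h1 := lip hadj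
          rw [Walk.length_cons]
          omega
      have h0 := key p
      have hv0 : T.dist v v = 0 := by simp
      rw [hv0, if_neg (relvFalse ui)] at h0
      omega
    have upper : H.dist v w ≤ T.dist v w + (if Rel T v ui w then 1 else 0) := by
      by_cases hw : w = v
      · rw [hw, if_neg (relvFalse ui)]
        simp [SimpleGraph.dist_self]
      · obtain ⟨p, hp, hlen⟩ := hTc.exists_path_of_dist v w
        obtain ⟨x, hvx, rest, hpeq, hrsup, hrel⟩ := path_from_v p hp hw
        by_cases hwS : Rel T v ui w
        · have hx : x = ui := nbr_unique hTa hvx hvi (hrel.trans hwS.symm)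
          subst hx
          have hle := dist_le
            (Walk.cons hHuj (Walk.cons hHij.symm (rest.transfer H (hTwalkH rest hrsup))))
          simp only [Walk.length_cons, Walk.length_transfer] at hle
          have hplen : p.length = rest.length + 1 := by rw [hpeq, Walk.length_cons]
          rw [if_pos hwS]
          omega
        · have hx : x ≠ ui := fun h => hwS (h ▸ hrel)
          have hnot : ∀ e ∈ p.edges, e ∈ H.edgeSet := by
            intro e he
            rw [hpeq, Walk.edges_cons] at he
            rcases List.mem_cons.mp he with rfl | he'
            · rw [SimpleGraph.mem_edgeSet, hAdj]
              exact Or.inl ⟨hvx, fun hcon => hx (Sym2.congr_right.mp hcon)⟩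
            · exact hTwalkH rest hrsup e he'
          have hle := dist_le (p.transfer H hnot)
          rw [Walk.length_transfer, hlen] at hle
          rw [if_neg hwS]
          omega
    omega
  -- σ(v, H) = σ(v, T) + C_i
  have hsigma : (∑ w, c w * H.dist v w) = (∑ w, c w * T.dist v w) + compWeight T c v ui := by
    rw [compWeight_eq, ← Finset.sum_add_distrib]
    refine Finset.sum_congr rfl fun w _ => ?_
    rw [hdistH w]
    by_cases h : Rel T v ui w
    · rw [if_pos h, if_pos h]
      push_cast
      ring
    · rw [if_neg h, if_neg h]
      push_cast
      ring
  -- branch weights of v in H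
  have hN0 : 0 ≤ N := by
    rw [hN]; exact Finset.sum_nonneg fun i _ => hc i
  have hcompH : ∀ u : V, compWeight H c v u ≤ N / 2 := by
    intro u
    rw [compWeight_eq]
    by_cases huv : u = v
    · rw [huv]
      have hz : ∀ w : V, ¬ Rel H v v w := fun w h => h.ne_left rfl
      simp only [hz, if_false]
      simpa using by linarith
    by_cases hA : Rel T v u ui
    · have hnB : ¬ Rel T v u uj := fun h => hndist (hA.symm.trans h)
      have key : ∀ w : V, Rel H v u w ↔ (Rel T v ui w ∨ Rel T v uj w) := by
        intro w
        rw [RH_char]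
        constructor
        · rintro (h | ⟨h1, h2⟩ | ⟨h1, h2⟩)
          · exact Or.inl (hA.symm.trans h)
          · exact Or.inr h2
          · exact absurd h1 hnB
        · rintro (h | h)
          · exact Or.inl (hA.trans h)
          · exact Or.inr (Or.inl ⟨hA, h⟩)
      calc (∑ w, if Rel H v u w then c w else 0)
          = compWeight T c v ui + compWeight T c v uj := by
            rw [compWeight_eq, compWeight_eq, ← Finset.sum_add_distrib]
            refine Finset.sum_congr rfl fun w _ => ?_
            by_cases h1 : Rel T v ui w <;> by_cases h2 : Rel T v uj w
            · exact absurd (h1.trans h2.symm) hndist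
            all_goals simp [key w, h1, h2]
        _ ≤ N / 2 := hsmall
    by_cases hB : Rel T v u uj
    · have key : ∀ w : V, Rel H v u w ↔ (Rel T v ui w ∨ Rel T v uj w) := by
        intro w
        rw [RH_char]
        constructor
        · rintro (h | ⟨h1, h2⟩ | ⟨h1, h2⟩)
          · exact Or.inr (hB.symm.trans h)
          · exact absurd h1 hA
          · exact Or.inl h2
        · rintro (h | h)
          · exact Or.inr (Or.inr ⟨hB, h⟩)
          · exact Or.inl (hB.trans h)
      calc (∑ w, if Rel H v u w then c w else 0)
          = compWeight T c v ui + compWeight T c v uj := by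
            rw [compWeight_eq, compWeight_eq, ← Finset.sum_add_distrib]
            refine Finset.sum_congr rfl fun w _ => ?_
            by_cases h1 : Rel T v ui w <;> by_cases h2 : Rel T v uj w
            · exact absurd (h1.trans h2.symm) hndist
            all_goals simp [key w, h1, h2]
        _ ≤ N / 2 := hsmall
    · have key : ∀ w : V, Rel H v u w ↔ Rel T v u w := by
        intro w
        rw [RH_char]
        constructor
        · rintro (h | ⟨h1, h2⟩ | ⟨h1, h2⟩)
          · exact h
          · exact absurd h1 hA
          · exact absurd h1 hB
        · exact fun h => Or.inl h
      calc (∑ w, if Rel H v u w then c w else 0)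
          = compWeight T c v u := by
            rw [compWeight_eq]
            exact Finset.sum_congr rfl fun w _ => by rw [if_congr (key w) rfl rfl]
        _ ≤ N / 2 := hmedian u
  -- v is a median of H
  have hmedH : ∀ u : V, (∑ w, c w * H.dist v w) ≤ ∑ w, c w * H.dist u w := by
    intro u
    by_cases huv : u = v
    · rw [huv]
    have hW := hcompH u
    set D : ℝ := (H.dist u v : ℝ) with hD
    have hD0 : 0 ≤ D := Nat.cast_nonneg _
    have point : ∀ w : V, c w * H.dist v w ≤
        c w * H.dist u w + (2 * (if Rel H v u w then c w else 0) * D - c w * D) := by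
      intro w
      by_cases hr : Rel H v u w
      · rw [if_pos hr]
        have ht : (H.dist v w : ℝ) ≤ (H.dist v u : ℝ) + (H.dist u w : ℝ) := by
          exact_mod_cast hHconn.dist_triangle
        have hvu : (H.dist v u : ℝ) = D := by rw [hD, SimpleGraph.dist_comm]
        have h2 : c w * (H.dist v w : ℝ) ≤ c w * ((H.dist v u : ℝ) + (H.dist u w : ℝ)) :=
          mul_le_mul_of_nonneg_left ht (hc w)
        rw [hvu] at h2
        nlinarith [hc w]
      · rw [if_neg hr]
        have heq : H.dist u w = H.dist u v + H.dist v w := dist_split hHconn hr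
        have heq' : (H.dist u w : ℝ) = D + (H.dist v w : ℝ) := by
          rw [heq]; push_cast; rw [hD]
        rw [heq']
        ring_nf
        nlinarith [hc w]
    calc (∑ w, c w * H.dist v w)
        ≤ ∑ w, (c w * H.dist u w + (2 * (if Rel H v u w then c w else 0) * D - c w * D)) :=
          Finset.sum_le_sum fun w _ => point w
      _ = (∑ w, c w * H.dist u w) + (2 * compWeight H c v u * D - N * D) := by
          rw [Finset.sum_add_distrib]
          congr 1
          rw [Finset.sum_sub_distrib]
          congr 1
          · rw [compWeight_eq, ← Finset.sum_mul, ← Finset.mul_sum]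
          · rw [← Finset.sum_mul, hN]
      _ ≤ ∑ w, c w * H.dist u w := by nlinarith
  -- H is acyclic
  have hHacyc : H.IsAcyclic := by
    have sub1 : ∀ x : V, T.Adj v x → x ≠ ui →
        ¬ (H \ fromEdgeSet {s(v, x)}).Reachable v x := by
      intro x hvx hxui hre
      obtain ⟨p0⟩ := hre
      obtain ⟨y, hvy, rest, hpeq, hrsup, hrel⟩ := path_from_v p0.bypass p0.bypass_isPath hvx.ne'
      obtain ⟨hHy, hsy⟩ := sdiff_single_adj.mp hvy
      obtain ⟨hTy, hyui⟩ := (hHvx y).mp hHy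
      have hyx : y ≠ x := fun h => hsy (by rw [h])
      have hrelH : Rel H v y x := rel_mono sdiff_le hrel
      rcases (RH_char y x).mp hrelH with h | ⟨h1, h2⟩ | ⟨h1, h2⟩
      · exact hyx (nbr_unique hTa hTy hvx h)
      · exact hyui (nbr_unique hTa hTy hvi h1)
      · exact hxui (nbr_unique hTa hvx hvi h2.symm)
    have sub2 : ¬ (H \ fromEdgeSet {s(ui, uj)}).Reachable ui uj := by
      intro hre
      obtain ⟨p0⟩ := hre
      have hed : ∀ e ∈ p0.edges, e ∈ T.edgeSet ∧ e ≠ s(v, ui) := by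
        intro e hep
        have hmem := p0.edges_subset_edgeSet hep
        induction e using Sym2.ind with
        | _ s t =>
          rw [SimpleGraph.mem_edgeSet, sdiff_single_adj] at hmem
          obtain ⟨hH', hne'⟩ := hmem
          rcases (hAdj s t).mp hH' with ⟨hT', hne''⟩ | he'
          · exact ⟨(SimpleGraph.mem_edgeSet _).mpr hT', hne''⟩
          · exact absurd he' hne'
      set q : T.Walk ui uj := p0.transfer T (fun e he => (hed e he).1) with hq
      have hqe : s(v, ui) ∉ q.edges := by
        rw [hq, Walk.edges_transfer]
        intro h
        exact (hed _ h).2 rfl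
      have hq'edges : s(v, ui) ∉ q.bypass.edges := fun h => hqe (q.edges_bypass_subset h)
      by_cases hvq : v ∈ q.bypass.support
      · have hp1 : (q.bypass.takeUntil v hvq).IsPath := q.bypass_isPath.takeUntil hvq
        obtain ⟨x, hvx, rest, hpeq, hrsup, hrel⟩ :=
          path_from_v (q.bypass.takeUntil v hvq).reverse hp1.reverse hui
        have hx : x = ui := nbr_unique hTa hvx hvi hrel
        have hmem : s(v, x) ∈ (q.bypass.takeUntil v hvq).reverse.edges := by
          rw [hpeq, Walk.edges_cons]
          exact List.mem_cons_self
        rw [Walk.edges_reverse, List.mem_reverse] at hmem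
        have := q.bypass.edges_takeUntil_subset hvq hmem
        rw [hx] at this
        exact hq'edges this
      · exact hndist (rel_of_walk q.bypass hvq hui huj)
    rw [isAcyclic_iff_forall_adj_isBridge]
    intro a b hab
    rw [isBridge_iff]
    refine fun hreach => ?_
    rcases (hAdj a b).mp hab with ⟨hTab, hneab⟩ | he
    · by_cases hva : a = v
      · subst hva
        exact sub1 b hTab (fun h => hneab (by rw [h])) hreach
      by_cases hvb : b = v
      · subst hvb
        refine sub1 a hTab.symm (fun h => hneab (by rw [h, Sym2.eq_swap])) ?_
        rw [Sym2.eq_swap] at hreach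
        exact hreach.symm
      · have hbridgeT : ¬ (T \ fromEdgeSet {s(a, b)}).Reachable a b :=
          (isBridge_iff.mp ((isAcyclic_iff_forall_adj_isBridge.mp hTa) hTab))
        apply hbridgeT
        obtain ⟨p⟩ := hreach
        refine reachable_of_walk (fun {x y} hxy => ?_) p
        obtain ⟨hH', hnexy⟩ := sdiff_single_adj.mp hxy
        rcases (hAdj x y).mp hH' with ⟨hT', hne'⟩ | he'
        · exact (sdiff_single_adj.mpr ⟨hT', hnexy⟩).reachable
        · have hvinotab : s(ui, v) ≠ s(a, b) := by
            intro h
            rcases Sym2.eq_iff.mp h with ⟨-, hv2⟩ | ⟨-, hv2⟩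
            exacts [hvb hv2.symm, hva hv2.symm]
          have hvjnotab : s(v, uj) ≠ s(a, b) := by
            intro h
            rcases Sym2.eq_iff.mp h with ⟨hv2, -⟩ | ⟨hv2, -⟩
            exacts [hva hv2.symm, hvb hv2.symm]
          rcases Sym2.eq_iff.mp he' with ⟨rfl, rfl⟩ | ⟨rfl, rfl⟩
          · exact ((sdiff_single_adj.mpr ⟨hvi.symm, hvinotab⟩).reachable).trans
              (sdiff_single_adj.mpr ⟨hvj, hvjnotab⟩).reachable
          · exact (((sdiff_single_adj.mpr ⟨hvi.symm, hvinotab⟩).reachable).trans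
              (sdiff_single_adj.mpr ⟨hvj, hvjnotab⟩).reachable).symm
    · rcases Sym2.eq_iff.mp he with ⟨rfl, rfl⟩ | ⟨rfl, rfl⟩
      · exact sub2 hreach
      · refine sub2 ?_
        rw [Sym2.eq_swap] at hreach
        exact hreach.symm
  exact ⟨⟨hHconn, hHacyc⟩, hcompH, hmedH, hsigma⟩
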